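/- Let μ be a finite Borel measure on Fin 2 → ℝ, let S ⊆ (Fin 2 → ℝ) be compact with μ(Sᶜ) = 0 and such that μ(V) > 0 for every open set V with V ∩ S nonempty (i.e., S is the support of μ). Let g : MvPolynomial (Fin 2) ℝ satisfy MvPolynomial.vanishingIdeal S = Ideal.span {g}, and let w : (Fin 2 → ℝ) → ℝ be continuous with w x > 0 for all x ∈ S. Let p : MvPolynomial (Fin 2) ℝ with totalDegree p ≤ totalDegree g, and suppose that for every q : MvPolynomial (Fin 2) ℝ with totalDegree q ≤ totalDegree g one has ∫ x, w x * (eval x q) * (eval x p) ∂μ = 0. Then there exists a real constant c such that p = MvPolynomial.C c * g. -/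

import Mathlib

open MvPolynomial MeasureTheory

lemma eq_C_of_totalDegree_eq_zero {σ : Type*} {R : Type*} [CommSemiring R]
    {f : MvPolynomial σ R} (hf : f.totalDegree = 0) : f = C (coeff 0 f) := by
  have := sum_homogeneousComponent f
  rw [hf] at this
  simpa [homogeneousComponent_zero] using this.symm

lemma top_homogeneousComponent_ne_zero {σ : Type*} {R : Type*} [CommSemiring R]
    {f : MvPolynomial σ R} (hf : f ≠ 0) :
    homogeneousComponent f.totalDegree f ≠ 0 := by
  classical
  obtain ⟨d, hd, hdeg⟩ : ∃ d ∈ f.support, (d.sum fun _ e => e) = f.totalDegree := by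
    have hne : f.support.Nonempty := by
      simpa [MvPolynomial.support_eq_empty] using hf
    obtain ⟨d, hd, hdeg⟩ := Finset.exists_mem_eq_sup f.support hne (fun m => m.sum fun _ e => e)
    exact ⟨d, hd, hdeg.symm⟩
  intro h
  have : coeff d (homogeneousComponent f.totalDegree f) = coeff d f := by
    rw [coeff_homogeneousComponent, if_pos]
    simpa [Finsupp.degree_apply, Finsupp.sum] using hdeg
  rw [h] at this
  exact (mem_support_iff.mp hd) this.symm

lemma totalDegree_sub_top_lt {σ : Type*} {R : Type*} [CommRing R]
    {f : MvPolynomial σ R} (h : f - homogeneousComponent f.totalDegree f ≠ 0) :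
    (f - homogeneousComponent f.totalDegree f).totalDegree < f.totalDegree := by
  classical
  set n := f.totalDegree with hn
  have key : ∀ d ∈ (f - homogeneousComponent n f).support, (d.sum fun _ e => e) < n := by
    intro d hd
    have hcoeff : coeff d (f - homogeneousComponent n f) ≠ 0 := mem_support_iff.mp hd
    rw [coeff_sub, coeff_homogeneousComponent] at hcoeff
    by_cases hdn : d.degree = n
    · simp [hdn] at hcoeff
    · have hdf : d ∈ f.support := by
        by_contra hcon
        simp [hdn, notMem_support_iff.mp hcon] at hcoeff
      have hle : (d.sum fun _ e => e) ≤ n := le_totalDegree hdf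
      have : (d.sum fun _ e => e) ≠ n := by
        simpa [Finsupp.degree_apply, Finsupp.sum] using hdn
      omega
  have hne : (f - homogeneousComponent n f).support.Nonempty := by
    simpa [MvPolynomial.support_eq_empty] using h
  obtain ⟨d, hd, hdeg⟩ := Finset.exists_mem_eq_sup _ hne (fun m : σ →₀ ℕ => m.sum fun _ e => e)
  calc (f - homogeneousComponent n f).totalDegree
      = d.sum fun _ e => e := hdeg
    _ < n := key d hd

lemma totalDegree_mul_eq {σ : Type*} {R : Type*} [CommRing R] [IsDomain R]
    {f g : MvPolynomial σ R} (hf : f ≠ 0) (hg : g ≠ 0) :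
    (f * g).totalDegree = f.totalDegree + g.totalDegree := by
  classical
  set a := f.totalDegree with ha
  set b := g.totalDegree with hb
  set F := homogeneousComponent a f with hF
  set G := homogeneousComponent b g with hG
  have hFne : F ≠ 0 := top_homogeneousComponent_ne_zero hf
  have hGne : G ≠ 0 := top_homogeneousComponent_ne_zero hg
  have hFhom : F.IsHomogeneous a := homogeneousComponent_isHomogeneous a f
  have hGhom : G.IsHomogeneous b := homogeneousComponent_isHomogeneous b g
  have hFG : (F * G).totalDegree = a + b :=
    (hFhom.mul hGhom).totalDegree (mul_ne_zero hFne hGne)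
  set f' := f - F with hf'
  set g' := g - G with hg'
  have hsplit : f * g = F * G + (F * g' + f' * G + f' * g') := by rw [hf', hg']; ring
  have hf'le : f' = 0 ∨ f'.totalDegree < a := by
    by_cases h : f' = 0
    · exact Or.inl h
    · exact Or.inr (totalDegree_sub_top_lt h)
  have hg'le : g' = 0 ∨ g'.totalDegree < b := by
    by_cases h : g' = 0
    · exact Or.inl h
    · exact Or.inr (totalDegree_sub_top_lt h)
  by_cases hE : F * g' + f' * G + f' * g' = 0
  · rw [hsplit, hE, add_zero, hFG]
  have hab : 0 < a + b := by
    rcases hf'le with h1 | h1 <;> rcases hg'le with h2 | h2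
    · exact absurd (by simp [h1, h2]) hE
    · omega
    · omega
    · omega
  have hterm1 : (F * g').totalDegree < a + b := by
    rcases hg'le with h | h
    · simpa [h] using hab
    · exact lt_of_le_of_lt (totalDegree_mul F g')
        (by have := hFhom.totalDegree_le; omega)
  have hterm2 : (f' * G).totalDegree < a + b := by
    rcases hf'le with h | h
    · simpa [h] using hab
    · exact lt_of_le_of_lt (totalDegree_mul f' G)
        (by have := hGhom.totalDegree_le; omega)
  have hterm3 : (f' * g').totalDegree < a + b := by
    rcases hf'le with h | h
    · simpa [h] using hab
    · rcases hg'le with h2 | h2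
      · simpa [h2] using hab
      · exact lt_of_le_of_lt (totalDegree_mul f' g') (by omega)
  have hEdeg : (F * g' + f' * G + f' * g').totalDegree < a + b := by
    calc (F * g' + f' * G + f' * g').totalDegree
        ≤ max (F * g' + f' * G).totalDegree (f' * g').totalDegree := totalDegree_add _ _
      _ < a + b := by
          have : (F * g' + f' * G).totalDegree ≤
              max (F * g').totalDegree (f' * G).totalDegree := totalDegree_add _ _
          omega
  rw [hsplit, totalDegree_add_eq_left_of_totalDegree_lt (by rw [hFG]; exact hEdeg), hFG]

theorem kernel_characterization_measure_theoretic
    (μ : Measure (Fin 2 → ℝ)) [IsFiniteMeasure μ]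
    (S : Set (Fin 2 → ℝ)) (hS : IsCompact S)
    (hμS : μ Sᶜ = 0)
    (hsupp : ∀ V : Set (Fin 2 → ℝ), IsOpen V → (V ∩ S).Nonempty → 0 < μ V)
    (g : MvPolynomial (Fin 2) ℝ)
    (hg : vanishingIdeal ℝ S = Ideal.span {g})
    (w : (Fin 2 → ℝ) → ℝ) (hw : Continuous w) (hwpos : ∀ x ∈ S, 0 < w x)
    (p : MvPolynomial (Fin 2) ℝ) (hp : p.totalDegree ≤ g.totalDegree)
    (horth : ∀ q : MvPolynomial (Fin 2) ℝ, q.totalDegree ≤ g.totalDegree →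
      ∫ x, w x * (eval x q) * (eval x p) ∂μ = 0) :
    ∃ c : ℝ, p = C c * g := by
  -- Step 1: the integrand f x = w x * p(x) * p(x) is continuous, nonneg a.e., with zero integral
  set f : (Fin 2 → ℝ) → ℝ := fun x => w x * eval x p * eval x p with hf
  have hfc : Continuous f := by
    continuity
  have haeS : ∀ᵐ x ∂μ, x ∈ S := by
    rw [MeasureTheory.ae_iff]
    exact hμS
  -- integrability
  have hint : Integrable f μ := by
    obtain ⟨C, hC⟩ := hS.exists_bound_of_continuousOn hfc.continuousOn
    refine ⟨hfc.aestronglyMeasurable, ?_⟩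
    exact MeasureTheory.HasFiniteIntegral.of_bounded
      (C := C) (haeS.mono fun x hx => hC x hx)
  have hnonneg : 0 ≤ᵐ[μ] f := by
    refine haeS.mono fun x hx => ?_
    have := (hwpos x hx).le
    have := mul_self_nonneg (eval x p)
    simp only [hf]
    rw [mul_assoc]
    positivity
  have hzero : ∫ x, f x ∂μ = 0 := horth p hp
  have hae0 : f =ᵐ[μ] 0 := by
    exact (MeasureTheory.integral_eq_zero_iff_of_nonneg_ae hnonneg hint).mp hzero
  -- Step 2: p vanishes on S
  have hvanish : ∀ x ∈ S, eval x p = 0 := by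
    intro x₀ hx₀
    by_contra hne
    set V : Set (Fin 2 → ℝ) := f ⁻¹' Set.Ioi 0 with hV
    have hVopen : IsOpen V := isOpen_Ioi.preimage hfc
    have hx₀V : x₀ ∈ V := by
      have h1 : 0 < w x₀ := hwpos x₀ hx₀
      have h2 : 0 < eval x₀ p * eval x₀ p := mul_self_pos.mpr hne
      simp only [hV, Set.mem_preimage, Set.mem_Ioi, hf]
      rw [mul_assoc]
      positivity
    have hμV : 0 < μ V := hsupp V hVopen ⟨x₀, hx₀V, hx₀⟩
    have hVnull : μ V = 0 := by
      have : μ {x | f x ≠ 0} = 0 := by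
        have := hae0
        rw [Filter.EventuallyEq, MeasureTheory.ae_iff] at this
        simpa using this
      refine measure_mono_null ?_ this
      intro x hx
      exact ne_of_gt hx
    exact absurd hVnull hμV.ne'
  -- Step 3: p ∈ vanishing ideal = span {g}, so p = r * g
  have hmem : p ∈ Ideal.span {g} := by
    rw [← hg]
    exact mem_vanishingIdeal_iff.mpr hvanish
  obtain ⟨r, hr⟩ := Ideal.mem_span_singleton'.mp hmem
  -- Step 4: degree argument
  by_cases hp0 : p = 0
  · refine ⟨0, ?_⟩
    simp [hp0]
  · have hr0 : r ≠ 0 := by rintro rfl; simp at hr; exact hp0 hr.symm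
    have hg0 : g ≠ 0 := by rintro rfl; simp at hr; exact hp0 hr.symm
    have hdeg : p.totalDegree = r.totalDegree + g.totalDegree := by
      rw [← hr]; exact totalDegree_mul_eq hr0 hg0
    have hrdeg : r.totalDegree = 0 := by omega
    refine ⟨coeff 0 r, ?_⟩
    have hrc := eq_C_of_totalDegree_eq_zero hrdeg
    rw [← hr]
    conv_lhs => rw [hrc]
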